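/- Let K be a real number with |K| < 1 and let τ ≥ 0. Then every complex number λ satisfying (λ + 1) e^{λτ} = K has strictly negative real part. Hence for |K| < 1 the stationary pulse cannot be destabilized by any constant delay: all characteristic roots remain in the open left half-plane. -/

import Mathlib

/-- If `|K| < 1` and `τ ≥ 0`, every complex root `λ` of the delayed characteristic
equation `(λ+1)e^{λτ} = K` has strictly negative real part: for `|K| < 1` no constant
delay can destabilize the stationary pulse. -/
theorem characteristic_roots_stable_of_abs_lt_one
    (K : ℝ) (hK : |K| < 1) (τ : ℝ) (hτ : 0 ≤ τ) :
    ∀ lam : ℂ, (lam + 1) * Complex.exp (lam * τ) = K → lam.re < 0 := by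
  intro lam heq
  by_contra h
  push_neg at h
  have h1 : (1 : ℝ) ≤ ‖lam + 1‖ := by
    calc (1 : ℝ) ≤ (lam + 1).re := by simp [Complex.add_re]; linarith
    _ ≤ |(lam + 1).re| := le_abs_self _
    _ ≤ ‖lam + 1‖ := Complex.abs_re_le_norm _
  have h2 : (1 : ℝ) ≤ ‖Complex.exp (lam * τ)‖ := by
    rw [Complex.norm_exp]
    have : 0 ≤ (lam * (τ : ℂ)).re := by
      simp [Complex.mul_re]
      positivity
    exact Real.one_le_exp this
  have habs : ‖(lam + 1) * Complex.exp (lam * τ)‖ = |K| := by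
    rw [heq, Complex.norm_real, Real.norm_eq_abs]
  rw [norm_mul] at habs
  nlinarith [habs, h1, h2]
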